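/- Let α > β > γ > 0 be reals, δ ∈ (0,π), ε = 1/√(cos(δ/2)), f₁(m) = ε√(α−γ)·sin(δm/2), h₁(m) = ε√(α−γ)·cos(δm/2), f₂(m) = ε√(α−γ)·cos(δm/2), h₂(m) = ε√(α−γ)·sin(δm/2), and let g₁, g₂ : ℤ → ℝ satisfy g₁(m)g₁(m+1) = (α−β) − f₁(m)f₁(m+1) and g₂(m)g₂(m+1) = f₂(m)f₂(m+1) − (α−β) for all m ∈ ℤ. Let r = (x,y,z) be the associated discrete ellipsoid binet. Fix a sign σ ∈ {1,−1} and k ∈ ℤ, and consider the diagonal polygon v(m) = r(m, σ(k−m)) for m ∈ ℤ. Then the diagonal polygon is a discrete circle lying in the plane Π = {(x,y,z) : √(1/β − 1/α)·x + σ·√(1/γ − 1/β)·z = μ} with μ = (1/cos(δ/2))·√((α−γ)/β)·sin(δk/2): (i) v(m) ∈ Π for all m ∈ ℤ, and (ii) there exist a point c ∈ Π and ρ ∈ ℝ such that ⟨v(m) − c, v(m+1) − c⟩ = ρ for all m ∈ ℤ (when ρ = R² ≥ 0 this says each vertex is the pole of the line through its two neighbours with respect to the circle of centre c and radius R in Π).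 -/

import Mathlib

open Real

noncomputable def pt (x y z : ℝ) : EuclideanSpace ℝ (Fin 3) :=
  (WithLp.equiv 2 (Fin 3 → ℝ)).symm ![x, y, z]

lemma pt_app0 (x y z : ℝ) : pt x y z 0 = x := by simp [pt]
lemma pt_app1 (x y z : ℝ) : pt x y z 1 = y := by simp [pt]
lemma pt_app2 (x y z : ℝ) : pt x y z 2 = z := by simp [pt]

lemma inner3 (a b : EuclideanSpace ℝ (Fin 3)) :
    (inner ℝ a b : ℝ) = a 0 * b 0 + a 1 * b 1 + a 2 * b 2 := by
  simp [PiLp.inner_apply, Fin.sum_univ_three, RCLike.inner_apply, mul_comm]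

lemma sub3 (a b : EuclideanSpace ℝ (Fin 3)) (i : Fin 3) : (a - b) i = a i - b i := by simp

lemma key_ident (su cu st ct sk ck B E S0 KX KY KZ : ℝ)
    (h1 : su^2 + cu^2 = 1) (h2 : st^2 + ct^2 = 1) (h3 : sk^2 + ck^2 = 1)
    (h4 : S0*ct*E = 2*B*sk - ct*E*sk)
    (h5 : KX + KZ = KY*E^2) :
    KX * ((su*(ck*cu+sk*su) - (sk+S0)/2)
        * ((su*ct+cu*st)*(ck*(cu*ct-su*st)+sk*(su*ct+cu*st)) - (sk+S0)/2))
    + KY * ((B - E*(su*(su*ct+cu*st)))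
        * (E*((ck*cu+sk*su)*(ck*(cu*ct-su*st)+sk*(su*ct+cu*st))) - B))
    + KZ * ((cu*(sk*cu-ck*su) - (sk-S0)/2)
        * ((cu*ct-su*st)*(sk*(cu*ct-su*st)-ck*(su*ct+cu*st)) - (sk-S0)/2))
    = KY * (-(1/4)*E^2 + (1/4)*E^2*S0^2 - B^2 + (1/4)*ck^2*E^2 + ct*B*E) := by
  linear_combination ((1/2:ℝ)*sk*S0*KZ + (-1/2:ℝ)*sk*E^2*S0*KY + (1/2:ℝ)*sk^2*KZ + (-1/2:ℝ)*sk^2*E^2*KY + (1:ℝ)*ct*B*E*KY + (1:ℝ)*ct*sk^2*B*E*KY + (1/2:ℝ)*ct^2*sk*S0*KZ + (-1/2:ℝ)*ct^2*sk*E^2*S0*KY + (-1/2:ℝ)*ct^2*sk^2*KZ + (-1/2:ℝ)*ct^2*sk^2*E^2*KY + (-1:ℝ)*st*sk*ck*B*E*KY + (1/2:ℝ)*st*ct*ck*E^2*S0*KY + (1/2:ℝ)*st*ct*sk*ck*E^2*KY + (1/2:ℝ)*st^2*sk*S0*KZ + (-1/2:ℝ)*st^2*sk^2*KZ + (1:ℝ)*cu^2*ct^2*sk^2*KZ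 + (-1:ℝ)*cu^2*st*ct*sk*ck*KZ + (-2:ℝ)*su*cu*ct^2*sk*ck*KZ + (-2:ℝ)*su*cu*st*ct*sk^2*KZ + (-1:ℝ)*su^2*ct^2*sk^2*KZ + (1:ℝ)*su^2*st*ct*sk*ck*KZ)*h1 + ((1/2:ℝ)*sk*S0*KZ + (-1/2:ℝ)*sk^2*KZ + (-1/2:ℝ)*cu^2*sk*E^2*S0*KY + (1:ℝ)*cu^2*sk^2*KZ + (-1/2:ℝ)*cu^2*sk^2*E^2*KY + (1/2:ℝ)*su*cu*ck*E^2*S0*KY + (-1:ℝ)*su*cu*sk*ck*KZ + (1/2:ℝ)*su*cu*sk*ck*E^2*KY)*h2 + ((-1/4:ℝ)*E^2*KY + (1:ℝ)*cu^2*ct*B*E*KY + (-1:ℝ)*su*cu*st*B*E*KY)*h3 + ((-1/2:ℝ)*ct*sk*E*KY + (1/2:ℝ)*st*ck*E*KY + (1:ℝ)*cu^2*ct*sk*E*KY + (-1:ℝ)*cu^2*st*ck*E*KY + (-1:ℝ)*su*cu*ct*ck*E*KY + (-1:ℝ)*su*cu*st*sk*E*KY)*h4 + ((1/4:ℝ)*S0^2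 + (1/2:ℝ)*sk*S0 + (1/4:ℝ)*sk^2 + (-1/2:ℝ)*cu^2*st*ct*ck*S0 + (-1/2:ℝ)*cu^2*st*ct*sk*ck + (-1/2:ℝ)*cu^2*st^2*sk*S0 + (-1/2:ℝ)*cu^2*st^2*sk^2 + (-1/2:ℝ)*su*cu*ck*S0 + (-1/2:ℝ)*su*cu*sk*ck + (-1/2:ℝ)*su*cu*ct^2*ck*S0 + (-1/2:ℝ)*su*cu*ct^2*sk*ck + (-1:ℝ)*su*cu*st*ct*sk*S0 + (-1:ℝ)*su*cu*st*ct*sk^2 + (1/2:ℝ)*su*cu*st^2*ck*S0 + (1/2:ℝ)*su*cu*st^2*sk*ck + (1:ℝ)*su*cu^3*st*ct*ck^2 + (1:ℝ)*su*cu^3*st^2*sk*ck + (-1/2:ℝ)*su^2*sk*S0 + (-1/2:ℝ)*su^2*sk^2 + (-1/2:ℝ)*su^2*ct^2*sk*S0 + (-1/2:ℝ)*su^2*ct^2*sk^2 + (1/2:ℝ)*su^2*st*ct*ck*S0 + (1/2:ℝ)*su^2*st*ct*sk*ck + (1:ℝ)*su^2*cu^2*ct^2*ck^2 + (3:ℝ)*su^2*cu^2*st*ct*sk*ck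 + (-1:ℝ)*su^2*cu^2*st^2*ck^2 + (1:ℝ)*su^2*cu^2*st^2*sk^2 + (2:ℝ)*su^3*cu*ct^2*sk*ck + (-1:ℝ)*su^3*cu*st*ct*ck^2 + (2:ℝ)*su^3*cu*st*ct*sk^2 + (-1:ℝ)*su^3*cu*st^2*sk*ck + (1:ℝ)*su^4*ct^2*sk^2 + (-1:ℝ)*su^4*st*ct*sk*ck)*h5

theorem diagonal_polygon_is_discrete_circle
    (α β γ : ℝ) (hαβ : β < α) (hβγ : γ < β) (hγ : 0 < γ)
    (δ : ℝ) (hδ : δ ∈ Set.Ioo 0 Real.pi)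
    (ε : ℝ) (hεdef : ε = 1 / Real.sqrt (Real.cos (δ / 2)))
    (f₁ h₁ f₂ h₂ : ℤ → ℝ)
    (hf₁ : ∀ m : ℤ, f₁ m = ε * Real.sqrt (α - γ) * Real.sin (δ * m / 2))
    (hh₁ : ∀ m : ℤ, h₁ m = ε * Real.sqrt (α - γ) * Real.cos (δ * m / 2))
    (hf₂ : ∀ m : ℤ, f₂ m = ε * Real.sqrt (α - γ) * Real.cos (δ * m / 2))
    (hh₂ : ∀ m : ℤ, h₂ m = ε * Real.sqrt (α - γ) * Real.sin (δ * m / 2))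
    (g₁ g₂ : ℤ → ℝ)
    (hg₁ : ∀ m : ℤ, g₁ m * g₁ (m + 1) = (α - β) - f₁ m * f₁ (m + 1))
    (hg₂ : ∀ m : ℤ, g₂ m * g₂ (m + 1) = f₂ m * f₂ (m + 1) - (α - β))
    (r : ℤ → ℤ → EuclideanSpace ℝ (Fin 3))
    (hr : ∀ m₁ m₂ : ℤ, r m₁ m₂ =
      pt (Real.sqrt (α / ((α - β) * (α - γ))) * f₁ m₁ * f₂ m₂)
        (Real.sqrt (β / ((α - β) * (β - γ))) * g₁ m₁ * g₂ m₂)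
        (Real.sqrt (γ / ((α - γ) * (β - γ))) * h₁ m₁ * h₂ m₂))
    (σ : ℤ) (hσ : σ = 1 ∨ σ = -1) (k : ℤ)
    (μ : ℝ) (hμ : μ = (1 / Real.cos (δ / 2)) * Real.sqrt ((α - γ) / β)
        * Real.sin (δ * k / 2))
    (P : Set (EuclideanSpace ℝ (Fin 3)))
    (hP : P = {p | Real.sqrt (1 / β - 1 / α) * p 0
        + (σ : ℝ) * Real.sqrt (1 / γ - 1 / β) * p 2 = μ})
    (v : ℤ → EuclideanSpace ℝ (Fin 3))
    (hv : ∀ m : ℤ, v m = r m (σ * (k - m))) :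
    (∀ m : ℤ, v m ∈ P) ∧
    ∃ c ∈ P, ∃ ρ : ℝ, ∀ m : ℤ,
      (inner ℝ (v m - c) (v (m + 1) - c) : ℝ) = ρ := by
  obtain ⟨hδ0, hδπ⟩ := hδ
  have hβ : 0 < β := hγ.trans hβγ
  have hα : 0 < α := hβ.trans hαβ
  have hApos : 0 < α - γ := by linarith
  have hBpos : 0 < α - β := by linarith
  have hGpos : 0 < β - γ := by linarith
  have hct : 0 < Real.cos (δ / 2) :=
    Real.cos_pos_of_mem_Ioo ⟨by linarith [Real.pi_pos], by linarith⟩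
  have hε2 : ε ^ 2 = 1 / Real.cos (δ / 2) := by
    rw [hεdef, div_pow, one_pow, Real.sq_sqrt hct.le]
  have hsA : Real.sqrt (α - γ) * Real.sqrt (α - γ) = α - γ := Real.mul_self_sqrt hApos.le
  set Cx := Real.sqrt (α / ((α - β) * (α - γ))) with hCxd
  set Cy := Real.sqrt (β / ((α - β) * (β - γ))) with hCyd
  set Cz := Real.sqrt (γ / ((α - γ) * (β - γ))) with hCzd
  set E := ε ^ 2 * (α - γ) with hEd
  set S0 := Real.sin (δ * (k : ℝ) / 2) * (2 * (α - β) - (α - γ)) / (α - γ) with hS0d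
  have hCx2 : Cx ^ 2 = α / ((α - β) * (α - γ)) :=
    Real.sq_sqrt (div_pos hα (mul_pos hBpos hApos)).le
  have hCy2 : Cy ^ 2 = β / ((α - β) * (β - γ)) :=
    Real.sq_sqrt (div_pos hβ (mul_pos hBpos hGpos)).le
  have hCz2 : Cz ^ 2 = γ / ((α - γ) * (β - γ)) :=
    Real.sq_sqrt (div_pos hγ (mul_pos hApos hGpos)).le
  have hCsum : Cx ^ 2 + Cz ^ 2 = Cy ^ 2 := by
    rw [hCx2, hCy2, hCz2]
    field_simp
    ring
  have hctE : Real.cos (δ / 2) * E = α - γ := by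
    rw [hEd, hε2]; field_simp
  have h4 : S0 * Real.cos (δ / 2) * E
      = 2 * (α - β) * Real.sin (δ * (k : ℝ) / 2)
        - Real.cos (δ / 2) * E * Real.sin (δ * (k : ℝ) / 2) := by
    rw [hS0d]
    field_simp
    linear_combination (2 * (α - β) * Real.sin (δ * (k : ℝ) / 2)) * hctE
  have hσ2 : ((σ : ℤ) : ℝ) ^ 2 = 1 := by rcases hσ with rfl | rfl <;> norm_num
  have hcosσ : ∀ j : ℤ, Real.cos (δ * ((σ * j : ℤ) : ℝ) / 2) = Real.cos (δ * (j : ℝ) / 2) := by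
    rcases hσ with rfl | rfl <;> intro j
    · norm_num
    · rw [show δ * (((-1 : ℤ) * j : ℤ) : ℝ) / 2 = -(δ * (j : ℝ) / 2) by push_cast; ring,
        Real.cos_neg]
  have hsinσ : ∀ j : ℤ, Real.sin (δ * ((σ * j : ℤ) : ℝ) / 2)
      = ((σ : ℤ) : ℝ) * Real.sin (δ * (j : ℝ) / 2) := by
    rcases hσ with rfl | rfl <;> intro j
    · norm_num
    · rw [show δ * (((-1 : ℤ) * j : ℤ) : ℝ) / 2 = -(δ * (j : ℝ) / 2) by push_cast; ring,
        Real.sin_neg]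
      push_cast; ring
  have hv0 : ∀ m : ℤ, v m 0
      = Cx * E * Real.sin (δ * (m : ℝ) / 2) * Real.cos (δ * ((k - m : ℤ) : ℝ) / 2) := by
    intro m
    rw [hv m, hr m (σ * (k - m)), pt_app0, hf₁ m, hf₂ (σ * (k - m)), hcosσ (k - m)]
    linear_combination (Cx * Real.sin (δ * (m : ℝ) / 2)
        * Real.cos (δ * ((k - m : ℤ) : ℝ) / 2) * ε ^ 2) * hsA
      - (Cx * Real.sin (δ * (m : ℝ) / 2) * Real.cos (δ * ((k - m : ℤ) : ℝ) / 2)) * hEd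
  have hv1 : ∀ m : ℤ, v m 1 = Cy * g₁ m * g₂ (σ * (k - m)) := by
    intro m
    rw [hv m, hr m (σ * (k - m)), pt_app1]
  have hv2 : ∀ m : ℤ, v m 2
      = Cz * E * ((σ : ℤ) : ℝ) * Real.cos (δ * (m : ℝ) / 2)
        * Real.sin (δ * ((k - m : ℤ) : ℝ) / 2) := by
    intro m
    rw [hv m, hr m (σ * (k - m)), pt_app2, hh₁ m, hh₂ (σ * (k - m)), hsinσ (k - m)]
    linear_combination (Cz * ((σ : ℤ) : ℝ) * Real.cos (δ * (m : ℝ) / 2)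
        * Real.sin (δ * ((k - m : ℤ) : ℝ) / 2) * ε ^ 2) * hsA
      - (Cz * ((σ : ℤ) : ℝ) * Real.cos (δ * (m : ℝ) / 2)
        * Real.sin (δ * ((k - m : ℤ) : ℝ) / 2)) * hEd
  have h1nn : (0 : ℝ) ≤ 1 / β - 1 / α := by
    have h := one_div_le_one_div_of_le hβ hαβ.le
    linarith
  have h2nn : (0 : ℝ) ≤ 1 / γ - 1 / β := by
    have h := one_div_le_one_div_of_le hγ hβγ.le
    linarith
  have hW1 : Real.sqrt (1 / β - 1 / α) * Cx = Real.sqrt (1 / (β * (α - γ))) := by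
    rw [hCxd, ← Real.sqrt_mul h1nn]
    congr 1
    field_simp
  have hW2 : Real.sqrt (1 / γ - 1 / β) * Cz = Real.sqrt (1 / (β * (α - γ))) := by
    rw [hCzd, ← Real.sqrt_mul h2nn]
    congr 1
    field_simp
  have hsab : Real.sqrt (1 / (β * (α - γ))) * (α - γ) = Real.sqrt ((α - γ) / β) := by
    rw [show (α - γ) / β = 1 / (β * (α - γ)) * (α - γ) ^ 2 by field_simp,
      Real.sqrt_mul (by positivity) ((α - γ) ^ 2), Real.sqrt_sq hApos.le]
  have hWE : Real.sqrt (1 / (β * (α - γ))) * E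
      = 1 / Real.cos (δ / 2) * Real.sqrt ((α - γ) / β) := by
    rw [hEd, hε2, ← hsab]; ring
  have hmem : ∀ m : ℤ, v m ∈ P := by
    intro m
    rw [hP]
    simp only [Set.mem_setOf_eq]
    rw [hv0 m, hv2 m, hμ]
    have hsum : Real.sin (δ * (m : ℝ) / 2) * Real.cos (δ * ((k - m : ℤ) : ℝ) / 2)
        + Real.cos (δ * (m : ℝ) / 2) * Real.sin (δ * ((k - m : ℤ) : ℝ) / 2)
        = Real.sin (δ * (k : ℝ) / 2) := by
      rw [← Real.sin_add]
      congr 1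
      push_cast; ring
    linear_combination (E * Real.sin (δ * (m : ℝ) / 2)
          * Real.cos (δ * ((k - m : ℤ) : ℝ) / 2)) * hW1
      + (Real.sqrt (1 / γ - 1 / β) * Cz * E * Real.cos (δ * (m : ℝ) / 2)
          * Real.sin (δ * ((k - m : ℤ) : ℝ) / 2)) * hσ2
      + (E * Real.cos (δ * (m : ℝ) / 2) * Real.sin (δ * ((k - m : ℤ) : ℝ) / 2)) * hW2
      + (Real.sqrt (1 / (β * (α - γ))) * E) * hsum
      + Real.sin (δ * (k : ℝ) / 2) * hWE
  refine ⟨hmem,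
    pt (Cx * E * (Real.sin (δ * (k : ℝ) / 2) + S0) / 2) 0
      (Cz * E * ((σ : ℤ) : ℝ) * (Real.sin (δ * (k : ℝ) / 2) - S0) / 2), ?_,
    Cy ^ 2 * (-(1/4) * E ^ 2 + (1/4) * E ^ 2 * S0 ^ 2 - (α - β) ^ 2
      + (1/4) * (Real.cos (δ * (k : ℝ) / 2)) ^ 2 * E ^ 2
      + Real.cos (δ / 2) * (α - β) * E), fun m => ?_⟩
  · rw [hP]
    simp only [Set.mem_setOf_eq, pt_app0, pt_app2]
    rw [hμ]
    linear_combination (E * (Real.sin (δ * (k : ℝ) / 2) + S0) / 2) * hW1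
      + (Real.sqrt (1 / γ - 1 / β) * Cz * E * (Real.sin (δ * (k : ℝ) / 2) - S0) / 2) * hσ2
      + (E * (Real.sin (δ * (k : ℝ) / 2) - S0) / 2) * hW2
      + Real.sin (δ * (k : ℝ) / 2) * hWE
  · have e1 : Real.sin (δ * ((m + 1 : ℤ) : ℝ) / 2)
        = Real.sin (δ * (m : ℝ) / 2) * Real.cos (δ / 2)
          + Real.cos (δ * (m : ℝ) / 2) * Real.sin (δ / 2) := by
      rw [show δ * ((m + 1 : ℤ) : ℝ) / 2 = δ * (m : ℝ) / 2 + δ / 2 by push_cast; ring,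
        Real.sin_add]
    have e2 : Real.cos (δ * ((m + 1 : ℤ) : ℝ) / 2)
        = Real.cos (δ * (m : ℝ) / 2) * Real.cos (δ / 2)
          - Real.sin (δ * (m : ℝ) / 2) * Real.sin (δ / 2) := by
      rw [show δ * ((m + 1 : ℤ) : ℝ) / 2 = δ * (m : ℝ) / 2 + δ / 2 by push_cast; ring,
        Real.cos_add]
    have e3 : Real.cos (δ * ((k - m : ℤ) : ℝ) / 2)
        = Real.cos (δ * (k : ℝ) / 2) * Real.cos (δ * (m : ℝ) / 2)
          + Real.sin (δ * (k : ℝ) / 2) * Real.sin (δ * (m : ℝ) / 2) := by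
      rw [show δ * ((k - m : ℤ) : ℝ) / 2 = δ * (k : ℝ) / 2 - δ * (m : ℝ) / 2 by
        push_cast; ring, Real.cos_sub]
    have e4 : Real.sin (δ * ((k - m : ℤ) : ℝ) / 2)
        = Real.sin (δ * (k : ℝ) / 2) * Real.cos (δ * (m : ℝ) / 2)
          - Real.cos (δ * (k : ℝ) / 2) * Real.sin (δ * (m : ℝ) / 2) := by
      rw [show δ * ((k - m : ℤ) : ℝ) / 2 = δ * (k : ℝ) / 2 - δ * (m : ℝ) / 2 by
        push_cast; ring, Real.sin_sub]
    have e5 : Real.cos (δ * ((k - (m + 1) : ℤ) : ℝ) / 2)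
        = Real.cos (δ * (k : ℝ) / 2) * (Real.cos (δ * (m : ℝ) / 2) * Real.cos (δ / 2)
            - Real.sin (δ * (m : ℝ) / 2) * Real.sin (δ / 2))
          + Real.sin (δ * (k : ℝ) / 2) * (Real.sin (δ * (m : ℝ) / 2) * Real.cos (δ / 2)
            + Real.cos (δ * (m : ℝ) / 2) * Real.sin (δ / 2)) := by
      rw [show δ * ((k - (m + 1) : ℤ) : ℝ) / 2
          = δ * (k : ℝ) / 2 - (δ * (m : ℝ) / 2 + δ / 2) by push_cast; ring,
        Real.cos_sub, Real.cos_add, Real.sin_add]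
    have e6 : Real.sin (δ * ((k - (m + 1) : ℤ) : ℝ) / 2)
        = Real.sin (δ * (k : ℝ) / 2) * (Real.cos (δ * (m : ℝ) / 2) * Real.cos (δ / 2)
            - Real.sin (δ * (m : ℝ) / 2) * Real.sin (δ / 2))
          - Real.cos (δ * (k : ℝ) / 2) * (Real.sin (δ * (m : ℝ) / 2) * Real.cos (δ / 2)
            + Real.cos (δ * (m : ℝ) / 2) * Real.sin (δ / 2)) := by
      rw [show δ * ((k - (m + 1) : ℤ) : ℝ) / 2
          = δ * (k : ℝ) / 2 - (δ * (m : ℝ) / 2 + δ / 2) by push_cast; ring,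
        Real.sin_sub, Real.cos_add, Real.sin_add]
    have hg1m : g₁ m * g₁ (m + 1)
        = (α - β) - E * (Real.sin (δ * (m : ℝ) / 2)
            * (Real.sin (δ * (m : ℝ) / 2) * Real.cos (δ / 2)
              + Real.cos (δ * (m : ℝ) / 2) * Real.sin (δ / 2))) := by
      rw [hg₁ m, hf₁ m, hf₁ (m + 1), e1]
      linear_combination (- Real.sin (δ * (m : ℝ) / 2)
            * (Real.sin (δ * (m : ℝ) / 2) * Real.cos (δ / 2)
              + Real.cos (δ * (m : ℝ) / 2) * Real.sin (δ / 2)) * ε ^ 2) * hsA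
        + (Real.sin (δ * (m : ℝ) / 2)
            * (Real.sin (δ * (m : ℝ) / 2) * Real.cos (δ / 2)
              + Real.cos (δ * (m : ℝ) / 2) * Real.sin (δ / 2))) * hEd
    have hg2m : g₂ (σ * (k - m)) * g₂ (σ * (k - (m + 1)))
        = E * ((Real.cos (δ * (k : ℝ) / 2) * Real.cos (δ * (m : ℝ) / 2)
              + Real.sin (δ * (k : ℝ) / 2) * Real.sin (δ * (m : ℝ) / 2))
            * (Real.cos (δ * (k : ℝ) / 2) * (Real.cos (δ * (m : ℝ) / 2) * Real.cos (δ / 2)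
                - Real.sin (δ * (m : ℝ) / 2) * Real.sin (δ / 2))
              + Real.sin (δ * (k : ℝ) / 2) * (Real.sin (δ * (m : ℝ) / 2) * Real.cos (δ / 2)
                + Real.cos (δ * (m : ℝ) / 2) * Real.sin (δ / 2)))) - (α - β) := by
      rcases hσ with rfl | rfl
      · have h := hg₂ (1 * (k - (m + 1)))
        rw [show 1 * (k - (m + 1)) + 1 = 1 * (k - m) by ring] at h
        rw [hf₂ (1 * (k - (m + 1))), hf₂ (1 * (k - m)), hcosσ (k - (m + 1)), hcosσ (k - m),
          e3, e5] at h
        linear_combination h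
          + ((Real.cos (δ * (k : ℝ) / 2) * Real.cos (δ * (m : ℝ) / 2)
              + Real.sin (δ * (k : ℝ) / 2) * Real.sin (δ * (m : ℝ) / 2))
            * (Real.cos (δ * (k : ℝ) / 2) * (Real.cos (δ * (m : ℝ) / 2) * Real.cos (δ / 2)
                - Real.sin (δ * (m : ℝ) / 2) * Real.sin (δ / 2))
              + Real.sin (δ * (k : ℝ) / 2) * (Real.sin (δ * (m : ℝ) / 2) * Real.cos (δ / 2)
                + Real.cos (δ * (m : ℝ) / 2) * Real.sin (δ / 2))) * ε ^ 2) * hsA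
          - ((Real.cos (δ * (k : ℝ) / 2) * Real.cos (δ * (m : ℝ) / 2)
              + Real.sin (δ * (k : ℝ) / 2) * Real.sin (δ * (m : ℝ) / 2))
            * (Real.cos (δ * (k : ℝ) / 2) * (Real.cos (δ * (m : ℝ) / 2) * Real.cos (δ / 2)
                - Real.sin (δ * (m : ℝ) / 2) * Real.sin (δ / 2))
              + Real.sin (δ * (k : ℝ) / 2) * (Real.sin (δ * (m : ℝ) / 2) * Real.cos (δ / 2)
                + Real.cos (δ * (m : ℝ) / 2) * Real.sin (δ / 2)))) * hEd
      · have h := hg₂ (-1 * (k - m))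
        rw [show -1 * (k - m) + 1 = -1 * (k - (m + 1)) by ring] at h
        rw [hf₂ (-1 * (k - m)), hf₂ (-1 * (k - (m + 1))), hcosσ (k - m), hcosσ (k - (m + 1)),
          e3, e5] at h
        linear_combination h
          + ((Real.cos (δ * (k : ℝ) / 2) * Real.cos (δ * (m : ℝ) / 2)
              + Real.sin (δ * (k : ℝ) / 2) * Real.sin (δ * (m : ℝ) / 2))
            * (Real.cos (δ * (k : ℝ) / 2) * (Real.cos (δ * (m : ℝ) / 2) * Real.cos (δ / 2)
                - Real.sin (δ * (m : ℝ) / 2) * Real.sin (δ / 2))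
              + Real.sin (δ * (k : ℝ) / 2) * (Real.sin (δ * (m : ℝ) / 2) * Real.cos (δ / 2)
                + Real.cos (δ * (m : ℝ) / 2) * Real.sin (δ / 2))) * ε ^ 2) * hsA
          - ((Real.cos (δ * (k : ℝ) / 2) * Real.cos (δ * (m : ℝ) / 2)
              + Real.sin (δ * (k : ℝ) / 2) * Real.sin (δ * (m : ℝ) / 2))
            * (Real.cos (δ * (k : ℝ) / 2) * (Real.cos (δ * (m : ℝ) / 2) * Real.cos (δ / 2)
                - Real.sin (δ * (m : ℝ) / 2) * Real.sin (δ / 2))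
              + Real.sin (δ * (k : ℝ) / 2) * (Real.sin (δ * (m : ℝ) / 2) * Real.cos (δ / 2)
                + Real.cos (δ * (m : ℝ) / 2) * Real.sin (δ / 2)))) * hEd
    have p1 := Real.sin_sq_add_cos_sq (δ * (m : ℝ) / 2)
    have p2 := Real.sin_sq_add_cos_sq (δ / 2)
    have p3 := Real.sin_sq_add_cos_sq (δ * (k : ℝ) / 2)
    rw [inner3]
    simp only [sub3, pt_app0, pt_app1, pt_app2]
    rw [hv0 m, hv0 (m + 1), hv1 m, hv1 (m + 1), hv2 m, hv2 (m + 1), e1, e2, e3, e4, e5, e6]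
    set su := Real.sin (δ * (m : ℝ) / 2) with hsu
    set cu := Real.cos (δ * (m : ℝ) / 2) with hcu
    set st := Real.sin (δ / 2) with hst
    set ct := Real.cos (δ / 2) with hctd
    set sk := Real.sin (δ * (k : ℝ) / 2) with hsk
    set ck := Real.cos (δ * (k : ℝ) / 2) with hck
    have h5 : Cx ^ 2 * E ^ 2 + Cz ^ 2 * E ^ 2 = Cy ^ 2 * E ^ 2 := by
      linear_combination E ^ 2 * hCsum
    have hkey := key_ident su cu st ct sk ck (α - β) E S0
      (Cx ^ 2 * E ^ 2) (Cy ^ 2) (Cz ^ 2 * E ^ 2) p1 p2 p3 h4 h5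
    linear_combination hkey
      + (Cy ^ 2 * (g₂ (σ * (k - m)) * g₂ (σ * (k - (m + 1))))) * hg1m
      + (Cy ^ 2 * ((α - β) - E * (su * (su * ct + cu * st)))) * hg2m
      + (Cz ^ 2 * E ^ 2 * ((cu * (sk * cu - ck * su) - (sk - S0) / 2)
          * ((cu * ct - su * st) * (sk * (cu * ct - su * st) - ck * (su * ct + cu * st))
            - (sk - S0) / 2))) * hσ2
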